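/- Suboptimality of pessimistic selection: let Π_s be a finite set of m policies, Z_π,i = w_π(x_i,a_i)c_i ≤ 0 i.i.d., R(π) = E[Z_π], R̂_λ(π) = −(1/(nλ))∑ᵢ log(1 − λZ_{π,i}), π* = argmin_{π∈Π_s} R(π), π̂ = argmin_{π∈Π_s} R̂_λ(π). For λ > 0 and δ ∈ (0,1], with probability at least 1 − δ: 0 ≤ R(π̂) − R(π*) ≤ λ S_λ(π*) + 2 log(2m/δ)/(λn), where S_λ(π) = E[Z_π²/(1 − λZ_π)]. -/

import Mathlib

open MeasureTheory ProbabilityTheory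

lemma chernoff_helper {Ω : Type*} [MeasurableSpace Ω] (μ : Measure Ω) [IsProbabilityMeasure μ]
    {α : Type*} [MeasurableSpace α] {n : ℕ}
    (D : Fin n → Ω → α) (D0 : Ω → α)
    (hDmeas : ∀ i, Measurable (D i))
    (hindep : iIndepFun D μ)
    (hident : ∀ i, IdentDistrib (D i) D0 μ μ)
    (g : α → ℝ) (hg : Measurable g)
    (hint : Integrable (fun ω => Real.exp (g (D0 ω))) μ) (c : ℝ) :
    μ {ω | c ≤ ∑ i, g (D i ω)} ≤
      ENNReal.ofReal (Real.exp (-c) * (∫ ω, Real.exp (g (D0 ω)) ∂μ) ^ n) := by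
  set X : Fin n → Ω → ℝ := fun i ω => g (D i ω) with hX
  have hXindep : iIndepFun X μ :=
    hindep.comp (fun _ => g) (fun _ => hg)
  have hXmeas : ∀ i, Measurable (X i) := fun i => hg.comp (hDmeas i)
  have hid : ∀ i, IdentDistrib (fun ω => Real.exp (X i ω)) (fun ω => Real.exp (g (D0 ω))) μ μ :=
    fun i => (hident i).comp (Real.measurable_exp.comp hg)
  have hXint : ∀ i ∈ Finset.univ, Integrable (fun ω => Real.exp (1 * X i ω)) μ := by
    intro i _
    simp only [one_mul]
    exact ((hid i).integrable_iff).mpr hint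
  have hsumint := hXindep.integrable_exp_mul_sum hXmeas hXint
  have key := measure_ge_le_exp_mul_mgf (μ := μ) (X := ∑ i, X i) c one_pos.le hsumint
  have hmgf : mgf (∑ i, X i) μ 1 = (∫ ω, Real.exp (g (D0 ω)) ∂μ) ^ n := by
    rw [hXindep.mgf_sum hXmeas]
    have h1 : ∀ i ∈ Finset.univ, mgf (X i) μ 1 = ∫ ω, Real.exp (g (D0 ω)) ∂μ := by
      intro i _
      rw [mgf]
      simp only [one_mul]
      exact (hid i).integral_eq
    rw [Finset.prod_congr rfl h1, Finset.prod_const, Finset.card_univ, Fintype.card_fin]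
  rw [hmgf, neg_one_mul] at key
  have hset : {ω | c ≤ ∑ i, g (D i ω)} = {ω | c ≤ (∑ i, X i) ω} := by
    ext ω; simp [Finset.sum_apply, hX]
  rw [hset, ← ENNReal.ofReal_toReal (measure_ne_top μ _)]
  exact ENNReal.ofReal_le_ofReal key

lemma iff_auxA {c s a : ℝ} (h : 0 < c) : -(1/c) * s ≤ a ↔ c * (-a) ≤ s := by
  rw [show -(1/c) * s = -(s/c) by ring, neg_le, le_div_iff₀ h]
  constructor <;> intro h' <;> nlinarith

lemma iff_auxB {c s b : ℝ} (h : 0 < c) : b ≤ -(1/c) * s ↔ c * b ≤ -s := by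
  rw [show -(1/c) * s = -(s/c) by ring, le_neg, div_le_iff₀ h]
  constructor <;> intro h' <;> nlinarith

/-- Suboptimality of pessimistic selection with the Logarithmic Smoothing estimator.
`D i` is the i-th logged data point (i.i.d.), and `f k (D i ω) = w_{π_k}(x_i,a_i) c_i ≤ 0`
 is the weighted cost of policy `k` on sample `i`. -/
theorem stmt16 {Ω : Type*} [MeasurableSpace Ω] (μ : Measure Ω) [IsProbabilityMeasure μ]
    {α : Type*} [MeasurableSpace α]
    (n m : ℕ) (hn : 0 < n) (hm : 0 < m)
    (D : Fin n → Ω → α) (D0 : Ω → α)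
    (hDmeas : ∀ i, Measurable (D i))
    (hindep : iIndepFun D μ)
    (hident : ∀ i, IdentDistrib (D i) D0 μ μ)
    (f : Fin m → α → ℝ) (hfmeas : ∀ k, Measurable (f k))
    (hf0 : ∀ k a, f k a ≤ 0)
    (hfint : ∀ k, Integrable (fun ω => f k (D0 ω)) μ)
    (hfint2 : ∀ k, Integrable (fun ω => f k (D0 ω) ^ 2) μ)
    (lam : ℝ) (hlam : 0 < lam) (δ : ℝ) (hδ : δ ∈ Set.Ioc (0:ℝ) 1)
    (R : Fin m → ℝ) (hR : ∀ k, R k = ∫ ω, f k (D0 ω) ∂μ)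
    (S : Fin m → ℝ)
    (hS : ∀ k, S k = ∫ ω, f k (D0 ω) ^ 2 / (1 - lam * f k (D0 ω)) ∂μ)
    (Rhat : Fin m → Ω → ℝ)
    (hRhat : ∀ k ω, Rhat k ω = -(1 / (n * lam)) * ∑ i, Real.log (1 - lam * f k (D i ω)))
    (kstar : Fin m) (hkstar : ∀ k, R kstar ≤ R k)
    (khat : Ω → Fin m) (hkhat : ∀ ω k, Rhat (khat ω) ω ≤ Rhat k ω) :
    ENNReal.ofReal (1 - δ) ≤
      μ {ω | 0 ≤ R (khat ω) - R kstar ∧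
             R (khat ω) - R kstar ≤
               lam * S kstar + 2 * Real.log (2 * m / δ) / (lam * n)} := by
  obtain ⟨hδ0, hδ1⟩ := hδ
  have hm1 : (1:ℝ) ≤ m := by exact_mod_cast hm
  have hn0 : (0:ℝ) < n := by exact_mod_cast hn
  have hnl : (0:ℝ) < (n:ℝ) * lam := mul_pos hn0 hlam
  set u : ℝ := Real.log (2 * m / δ) / ((n:ℝ) * lam) with hu
  have h2m : (0:ℝ) < 2 * m / δ := by positivity
  have hexpu : Real.exp (-((n:ℝ) * lam * u)) = δ / (2 * m) := by
    rw [hu, mul_div_cancel₀ _ hnl.ne', Real.exp_neg, Real.exp_log h2m, inv_div]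
  -- basic pointwise facts
  have hpos : ∀ k x, (1:ℝ) ≤ 1 - lam * f k x := by
    intro k x
    have : lam * f k x ≤ 0 := mul_nonpos_of_nonneg_of_nonpos hlam.le (hf0 k x)
    linarith
  have hRle : ∀ k, R k ≤ 0 := by
    intro k
    rw [hR]
    exact integral_nonpos fun ω => hf0 k _
  -- the log function per policy
  set gA : Fin m → α → ℝ := fun k x => Real.log (1 - lam * f k x) with hgA
  have hgAmeas : ∀ k, Measurable (gA k) :=
    fun k => Real.measurable_log.comp (measurable_const.sub ((hfmeas k).const_mul lam))
  have hexpgA : ∀ k x, Real.exp (gA k x) = 1 - lam * f k x :=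
    fun k x => Real.exp_log (by linarith [hpos k x])
  -- side A : Rhat does not underestimate R by more than u
  have hintA : ∀ k, Integrable (fun ω => Real.exp (gA k (D0 ω))) μ := by
    intro k
    have : (fun ω => Real.exp (gA k (D0 ω))) = fun ω => 1 - lam * f k (D0 ω) := by
      funext ω; rw [hexpgA]
    rw [this]
    exact (integrable_const 1).sub ((hfint k).const_mul lam)
  have hEA : ∀ k, (∫ ω, Real.exp (gA k (D0 ω)) ∂μ) = 1 - lam * R k := by
    intro k
    have h1 : (∫ ω, Real.exp (gA k (D0 ω)) ∂μ) = ∫ ω, (1 - lam * f k (D0 ω)) ∂μ := by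
      congr 1; funext ω; rw [hexpgA]
    rw [h1, integral_sub (integrable_const 1) ((hfint k).const_mul lam),
      integral_const, integral_const_mul, probReal_univ, hR]
    simp
  have hA : ∀ k, μ {ω | Rhat k ω ≤ R k - u} ≤ ENNReal.ofReal (δ / (2 * m)) := by
    intro k
    have hset : {ω | Rhat k ω ≤ R k - u} =
        {ω | (n:ℝ) * lam * (-(R k - u)) ≤ ∑ i, gA k (D i ω)} := by
      ext ω
      rw [Set.mem_setOf_eq, Set.mem_setOf_eq, hRhat k ω, iff_auxA hnl]
    rw [hset]
    refine le_trans (chernoff_helper μ D D0 hDmeas hindep hident (gA k) (hgAmeas k)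
      (hintA k) _) (ENNReal.ofReal_le_ofReal ?_)
    rw [hEA k]
    have hb : 1 - lam * R k ≤ Real.exp (-(lam * R k)) := by
      have := Real.add_one_le_exp (-(lam * R k)); linarith
    have hb0 : (0:ℝ) ≤ 1 - lam * R k := by nlinarith [hRle k]
    calc Real.exp (-((n:ℝ) * lam * (-(R k - u)))) * (1 - lam * R k) ^ n
        ≤ Real.exp (-((n:ℝ) * lam * (-(R k - u)))) * Real.exp (-(lam * R k)) ^ n := by
          have := Real.exp_pos (-((n:ℝ) * lam * (-(R k - u))))
          gcongr
      _ = Real.exp (-((n:ℝ) * lam * u)) := by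
          rw [← Real.exp_nat_mul, ← Real.exp_add]
          congr 1; ring
      _ = δ / (2 * m) := hexpu
  -- side B : Rhat kstar does not overestimate R + lam * S by more than u
  set gB : α → ℝ := fun x => -Real.log (1 - lam * f kstar x) with hgB
  have hgBmeas : Measurable gB := (hgAmeas kstar).neg
  have hexpgB : ∀ x, Real.exp (gB x) = (1 - lam * f kstar x)⁻¹ := by
    intro x
    rw [hgB]
    simp only [Real.exp_neg, hexpgA kstar x]
    exact congrArg _ (hexpgA kstar x)
  have hD0ae : AEMeasurable D0 μ := (hident ⟨0, hn⟩).aemeasurable_snd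
  have hWmeas : AEStronglyMeasurable
      (fun ω => f kstar (D0 ω) ^ 2 / (1 - lam * f kstar (D0 ω))) μ := by
    have hφ : Measurable (fun x => f kstar x ^ 2 / (1 - lam * f kstar x)) :=
      ((hfmeas kstar).pow_const 2).div (measurable_const.sub ((hfmeas kstar).const_mul lam))
    exact (hφ.comp_aemeasurable hD0ae).aestronglyMeasurable
  have hW : Integrable (fun ω => f kstar (D0 ω) ^ 2 / (1 - lam * f kstar (D0 ω))) μ := by
    refine (hfint2 kstar).mono hWmeas (Filter.Eventually.of_forall fun ω => ?_)
    rw [Real.norm_eq_abs, Real.norm_eq_abs]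
    have h1 := hpos kstar (D0 ω)
    have h2 : (0:ℝ) ≤ f kstar (D0 ω) ^ 2 := sq_nonneg _
    rw [abs_of_nonneg (div_nonneg h2 (by linarith)), abs_of_nonneg h2]
    calc f kstar (D0 ω) ^ 2 / (1 - lam * f kstar (D0 ω))
        ≤ f kstar (D0 ω) ^ 2 / 1 := by gcongr <;> linarith
      _ = f kstar (D0 ω) ^ 2 := by rw [div_one]
  have hintB : Integrable (fun ω => Real.exp (gB (D0 ω))) μ := by
    have heq : (fun ω => Real.exp (gB (D0 ω))) =
        fun ω => 1 + lam * f kstar (D0 ω)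
          + lam ^ 2 * (f kstar (D0 ω) ^ 2 / (1 - lam * f kstar (D0 ω))) := by
      funext ω
      rw [hexpgB]
      have h1 := hpos kstar (D0 ω)
      have hne : (1 - lam * f kstar (D0 ω)) ≠ 0 := by linarith
      field_simp
      try ring
    rw [heq]
    have hi1 : Integrable (fun ω => 1 + lam * f kstar (D0 ω)) μ :=
      (integrable_const 1).add ((hfint kstar).const_mul lam)
    exact hi1.add (hW.const_mul _)
  have hEB : (∫ ω, Real.exp (gB (D0 ω)) ∂μ) = 1 + lam * R kstar + lam ^ 2 * S kstar := by
    have heq : (∫ ω, Real.exp (gB (D0 ω)) ∂μ) =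
        ∫ ω, (1 + lam * f kstar (D0 ω)
          + lam ^ 2 * (f kstar (D0 ω) ^ 2 / (1 - lam * f kstar (D0 ω)))) ∂μ := by
      congr 1
      funext ω
      rw [hexpgB]
      have h1 := hpos kstar (D0 ω)
      have hne : (1 - lam * f kstar (D0 ω)) ≠ 0 := by linarith
      field_simp
      try ring
    have hi1 : Integrable (fun ω => 1 + lam * f kstar (D0 ω)) μ :=
      (integrable_const 1).add ((hfint kstar).const_mul lam)
    have hi2 : Integrable
        (fun ω => lam ^ 2 * (f kstar (D0 ω) ^ 2 / (1 - lam * f kstar (D0 ω)))) μ :=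
      hW.const_mul _
    have hi3 : Integrable (fun ω : Ω => (1:ℝ)) μ := integrable_const 1
    have hi4 : Integrable (fun ω => lam * f kstar (D0 ω)) μ := (hfint kstar).const_mul lam
    rw [heq, integral_add hi1 hi2, integral_add hi3 hi4,
      integral_const, integral_const_mul, integral_const_mul, probReal_univ, hR, hS]
    simp
  have hEB0 : (0:ℝ) ≤ 1 + lam * R kstar + lam ^ 2 * S kstar := by
    rw [← hEB]
    exact integral_nonneg fun ω => (Real.exp_pos _).le
  have hB : μ {ω | R kstar + lam * S kstar + u ≤ Rhat kstar ω} ≤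
      ENNReal.ofReal (δ / (2 * m)) := by
    have hset : {ω | R kstar + lam * S kstar + u ≤ Rhat kstar ω} =
        {ω | (n:ℝ) * lam * (R kstar + lam * S kstar + u) ≤ ∑ i, gB (D i ω)} := by
      ext ω
      rw [Set.mem_setOf_eq, Set.mem_setOf_eq, hRhat kstar ω]
      rw [iff_auxB hnl]
      have : ∑ i, gB (D i ω) = -∑ i, Real.log (1 - lam * f kstar (D i ω)) := by
        rw [hgB]; rw [← Finset.sum_neg_distrib]
      rw [this]
    rw [hset]
    refine le_trans (chernoff_helper μ D D0 hDmeas hindep hident gB hgBmeas hintB _)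
      (ENNReal.ofReal_le_ofReal ?_)
    rw [hEB]
    have hb : 1 + lam * R kstar + lam ^ 2 * S kstar ≤
        Real.exp (lam * R kstar + lam ^ 2 * S kstar) := by
      have := Real.add_one_le_exp (lam * R kstar + lam ^ 2 * S kstar); linarith
    calc Real.exp (-((n:ℝ) * lam * (R kstar + lam * S kstar + u))) *
          (1 + lam * R kstar + lam ^ 2 * S kstar) ^ n
        ≤ Real.exp (-((n:ℝ) * lam * (R kstar + lam * S kstar + u))) *
          Real.exp (lam * R kstar + lam ^ 2 * S kstar) ^ n := by gcongr
      _ = Real.exp (-((n:ℝ) * lam * u)) := by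
          rw [← Real.exp_nat_mul, ← Real.exp_add]
          congr 1; ring
      _ = δ / (2 * m) := hexpu
  -- measurability of Rhat
  have hRhatMeas : ∀ k, Measurable (Rhat k) := by
    intro k
    have : Rhat k = fun ω => -(1 / ((n:ℝ) * lam)) * ∑ i, Real.log (1 - lam * f k (D i ω)) :=
      funext fun ω => hRhat k ω
    rw [this]
    exact (Finset.measurable_sum _ fun i _ =>
      Real.measurable_log.comp ((measurable_const.sub ((hfmeas k).const_mul lam)).comp
        (hDmeas i))).const_mul _
  -- the good event
  set G : Set Ω := (⋂ k, {ω | R k - u < Rhat k ω}) ∩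
      {ω | Rhat kstar ω < R kstar + lam * S kstar + u} with hG
  have hGmeas : MeasurableSet G :=
    (MeasurableSet.iInter fun k => measurableSet_lt measurable_const (hRhatMeas k)).inter
      (measurableSet_lt (hRhatMeas kstar) measurable_const)
  have hGc : Gᶜ = (⋃ k, {ω | Rhat k ω ≤ R k - u}) ∪
      {ω | R kstar + lam * S kstar + u ≤ Rhat kstar ω} := by
    rw [hG]
    ext ω
    simp only [Set.mem_compl_iff, Set.mem_inter_iff, Set.mem_iInter, Set.mem_setOf_eq,
      not_and_or, not_forall, not_lt, Set.mem_union, Set.mem_iUnion]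
  have hGcbound : μ Gᶜ ≤ ENNReal.ofReal δ := by
    rw [hGc]
    calc μ ((⋃ k, {ω | Rhat k ω ≤ R k - u}) ∪
          {ω | R kstar + lam * S kstar + u ≤ Rhat kstar ω})
        ≤ μ (⋃ k, {ω | Rhat k ω ≤ R k - u}) +
          μ {ω | R kstar + lam * S kstar + u ≤ Rhat kstar ω} := measure_union_le _ _
      _ ≤ (∑ k, μ {ω | Rhat k ω ≤ R k - u}) + ENNReal.ofReal (δ / (2 * m)) := by
          exact add_le_add (measure_iUnion_fintype_le _ _) hB
      _ ≤ (∑ _k : Fin m, ENNReal.ofReal (δ / (2 * m))) + ENNReal.ofReal (δ / (2 * m)) := by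
          exact add_le_add (Finset.sum_le_sum fun k _ => hA k) le_rfl
      _ = ((m : ENNReal) + 1) * ENNReal.ofReal (δ / (2 * m)) := by
          rw [Finset.sum_const, Finset.card_univ, Fintype.card_fin]
          push_cast
          ring
      _ = ENNReal.ofReal (((m:ℝ) + 1) * (δ / (2 * m))) := by
          rw [ENNReal.ofReal_mul (by positivity)]
          congr 1
          rw [← ENNReal.ofReal_natCast m, ← ENNReal.ofReal_one, ← ENNReal.ofReal_add
            (by positivity) (by norm_num)]
      _ ≤ ENNReal.ofReal δ := by
          apply ENNReal.ofReal_le_ofReal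
          rw [mul_div_assoc', div_le_iff₀ (by positivity)]
          nlinarith
  have hGbound : ENNReal.ofReal (1 - δ) ≤ μ G := by
    have h1 : μ G = 1 - μ Gᶜ := by
      rw [← prob_compl_eq_one_sub hGmeas.compl, compl_compl]
    rw [h1, show ENNReal.ofReal (1 - δ) = 1 - ENNReal.ofReal δ by
      rw [ENNReal.ofReal_sub 1 hδ0.le, ENNReal.ofReal_one]]
    exact tsub_le_tsub_left hGcbound 1
  refine le_trans hGbound (measure_mono ?_)
  rintro ω ⟨h1, h2⟩
  simp only [Set.mem_iInter, Set.mem_setOf_eq] at h1 h2 ⊢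
  constructor
  · linarith [hkstar (khat ω)]
  · have ha : R (khat ω) - u < Rhat (khat ω) ω := h1 (khat ω)
    have hb := hkhat ω kstar
    have h2u : lam * S kstar + 2 * Real.log (2 * m / δ) / (lam * n) =
        lam * S kstar + 2 * u := by rw [hu]; ring
    rw [h2u]
    linarith
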